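/- Let A be a symmetric quasi-Cartan matrix indexed by a finite set V with n = |V| elements, and suppose A is ℤ-equivalent to the Cartan matrix of type A_n. Let G_A be the underlying simple graph of A, let x, y be vertices, and let p be a path from x to y in G_A whose length equals the graph distance from x to y. Then every path from x to y in G_A passes through every vertex of p. -/

import Mathlib

open Matrix

/-- `A` and `A'` are ℤ-equivalent: `A' = Mᵀ·A·M` for some `M` invertible over ℤ. -/
def ZEquiv {V : Type*} [Fintype V] [DecidableEq V] (A A' : Matrix V V ℤ) : Prop :=
  ∃ M N : Matrix V V ℤ, M * N = 1 ∧ N * M = 1 ∧ A' = Mᵀ * A * M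

/-- The Cartan matrix of Dynkin type `A_n`. -/
def CartanA (n : ℕ) : Matrix (Fin n) (Fin n) ℤ :=
  fun i j => if i = j then 2
    else if (i : ℕ) + 1 = j ∨ (j : ℕ) + 1 = i then -1
    else 0

/-- The underlying simple graph of a symmetric matrix `A`: distinct vertices `i, j` are
adjacent exactly when `A i j ≠ 0` (for symmetric `A`, the symmetrized condition below is
equivalent to `A i j ≠ 0`). -/
def graphOf {V : Type*} (A : Matrix V V ℤ) : SimpleGraph V where
  Adj i j := i ≠ j ∧ A i j ≠ 0 ∧ A j i ≠ 0
  symm := ⟨fun _ _ h => ⟨Ne.symm h.1, h.2.2, h.2.1⟩⟩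
  loopless := ⟨fun _ h => h.1 rfl⟩

open Finset

namespace Stmt16Aux

/-- extend a vector on `Fin n` to `ℕ` by zero. -/
def extz (n : ℕ) (u : Fin n → ℤ) (j : ℕ) : ℤ := if h : j < n then u ⟨j, h⟩ else 0

/-- predecessor-shifted extension. -/
def prez (n : ℕ) (u : Fin n → ℤ) : ℕ → ℤ
  | 0 => 0
  | (k+1) => extz n u k

/-- the embedding of the `CartanA n` lattice into `ℤ^(n+1)`. -/
def psi (n : ℕ) (u : Fin n → ℤ) : Fin (n+1) → ℤ := fun j => extz n u j - prez n u j

lemma extz_coe (n : ℕ) (u : Fin n → ℤ) (i : Fin n) : extz n u i = u i := by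
  simp [extz]

lemma extz_add (n : ℕ) (u v : Fin n → ℤ) (j : ℕ) :
    extz n (u + v) j = extz n u j + extz n v j := by
  unfold extz; split <;> simp

lemma prez_add (n : ℕ) (u v : Fin n → ℤ) (j : ℕ) :
    prez n (u + v) j = prez n u j + prez n v j := by
  cases j <;> simp [prez, extz_add]

lemma psi_add (n : ℕ) (u v : Fin n → ℤ) : psi n (u + v) = psi n u + psi n v := by
  funext j; simp [psi, extz_add, prez_add]; ring

lemma psi_zero (n : ℕ) : psi n 0 = 0 := by
  funext j
  have h : (0 : Fin n → ℤ) + 0 = 0 := by simp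
  have := congrFun (psi_add n 0 0) j
  rw [h] at this
  simpa using this.symm

lemma psi_sum (n : ℕ) (u : Fin n → ℤ) : ∑ j, psi n u j = 0 := by
  have : ∑ j : Fin (n+1), psi n u j
      = ∑ j ∈ range (n+1), (extz n u j - prez n u j) := by
    rw [← Fin.sum_univ_eq_sum_range (fun j => extz n u j - prez n u j) (n+1)]
    rfl
  rw [this, Finset.sum_range_succ' (fun j => extz n u j - prez n u j) n]
  have h1 : ∀ k, extz n u (k+1) - prez n u (k+1) = extz n u (k+1) - extz n u k := by
    intro k; rfl
  simp only [h1]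
  rw [Finset.sum_range_sub (fun k => extz n u k) n]
  have hn : extz n u n = 0 := by simp [extz]
  simp [prez, hn]

lemma psi_eq_zero (n : ℕ) (u : Fin n → ℤ) (h : psi n u = 0) : u = 0 := by
  have key : ∀ k : ℕ, extz n u k = 0 := by
    intro k
    induction k with
    | zero =>
      have := congrFun h ⟨0, Nat.succ_pos n⟩
      simpa [psi, prez] using this
    | succ k ih =>
      by_cases hk : k + 1 < n + 1
      · have := congrFun h ⟨k+1, hk⟩
        simp only [psi, Pi.zero_apply] at this
        have : extz n u (k+1) = prez n u (k+1) := by omega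
        rw [this]
        simpa [prez] using ih
      · simp [extz]; omega
  funext i
  have := key i
  rwa [extz_coe] at this

end Stmt16Aux

namespace Stmt16Aux

lemma cartan_row (n : ℕ) (v : Fin n → ℤ) (i : Fin n) :
    ∑ j : Fin n, CartanA n i j * v j
      = 2 * v i - extz n v (↑i+1) - prez n v ↑i := by
  have hsplit : ∀ j : Fin n, CartanA n i j * v j
      = 2*(if j = i then v j else 0) - (if (j:ℕ) = ↑i+1 then v j else 0)
        - (if (j:ℕ)+1 = ↑i then v j else 0) := by
    intro j
    unfold CartanA
    simp only [Fin.ext_iff]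
    split_ifs <;> first | ring1 | omega | (exfalso; omega)
  rw [Finset.sum_congr rfl (fun j _ => hsplit j)]
  rw [Finset.sum_sub_distrib, Finset.sum_sub_distrib]
  congr 1
  · congr 1
    · rw [← Finset.mul_sum, Finset.sum_ite_eq' Finset.univ i v]
      simp
    · by_cases h : (i:ℕ)+1 < n
      · have heq : ∀ j : Fin n, ((j:ℕ) = ↑i+1) ↔ j = ⟨↑i+1, h⟩ := by
          intro j; rw [Fin.ext_iff]
        simp only [heq]
        rw [Finset.sum_ite_eq' Finset.univ (⟨↑i+1, h⟩ : Fin n) v]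
        simp [extz, h]
      · have : ∀ j : Fin n, ¬((j:ℕ) = ↑i+1) := by
          intro j hj; exact h (hj ▸ j.isLt)
        rw [Finset.sum_congr rfl (fun j _ => if_neg (this j))]
        simp [extz, h]
  · rcases hi : (i:ℕ) with _ | k
    · have hne : ∀ j : Fin n, ¬((j:ℕ)+1 = 0) := by intro j; omega
      rw [Finset.sum_congr rfl (fun j _ => if_neg (hne j))]
      simp [prez]
    · have hk : k < n := by have := i.isLt; omega
      have heq : ∀ j : Fin n, ((j:ℕ)+1 = k+1) ↔ j = ⟨k, hk⟩ := by
        intro j; rw [Fin.ext_iff]; simp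
      simp only [heq]
      rw [Finset.sum_ite_eq' Finset.univ (⟨k, hk⟩ : Fin n) v]
      simp [prez, extz, hk]

lemma psi_dot (n : ℕ) (u v : Fin n → ℤ) :
    ∑ j : Fin (n+1), psi n u j * psi n v j
      = ∑ i : Fin n, ∑ j : Fin n, u i * (CartanA n i j * v j) := by
  set U := extz n u with hU
  set Vv := extz n v with hV
  set Up := prez n u with hUp
  set Vp := prez n v with hVp
  have hUn : U n = 0 := by simp [hU, extz]
  have hVn : Vv n = 0 := by simp [hV, extz]
  -- LHS conversion
  have hL : ∑ j : Fin (n+1), psi n u j * psi n v j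
      = ∑ j ∈ range (n+1), (U j - Up j) * (Vv j - Vp j) := by
    rw [← Fin.sum_univ_eq_sum_range (fun j => (U j - Up j) * (Vv j - Vp j)) (n+1)]
    rfl
  have e1 : ∑ j ∈ range (n+1), U j * Vv j = ∑ j ∈ range n, U j * Vv j := by
    rw [Finset.sum_range_succ]; simp [hUn]
  have e2 : ∑ j ∈ range (n+1), Up j * Vp j = ∑ j ∈ range n, U j * Vv j := by
    rw [Finset.sum_range_succ' (fun j => Up j * Vp j) n]
    simp [hUp, hVp, prez, hU, hV]
  have e3 : ∑ j ∈ range (n+1), U j * Vp j = ∑ j ∈ range n, U (j+1) * Vv j := by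
    rw [Finset.sum_range_succ' (fun j => U j * Vp j) n]
    simp [hVp, prez, hV]
  have e4 : ∑ j ∈ range (n+1), Up j * Vv j = ∑ j ∈ range n, U j * Vv (j+1) := by
    rw [Finset.sum_range_succ' (fun j => Up j * Vv j) n]
    simp [hUp, prez, hU]
  have hLL : ∑ j : Fin (n+1), psi n u j * psi n v j
      = 2 * (∑ j ∈ range n, U j * Vv j) - (∑ j ∈ range n, U (j+1) * Vv j)
        - (∑ j ∈ range n, U j * Vv (j+1)) := by
    rw [hL]
    have expand : ∀ j, (U j - Up j) * (Vv j - Vp j)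
        = U j * Vv j + Up j * Vp j - U j * Vp j - Up j * Vv j := by intro j; ring
    rw [Finset.sum_congr rfl (fun j _ => expand j)]
    rw [Finset.sum_sub_distrib, Finset.sum_sub_distrib, Finset.sum_add_distrib,
      e1, e2, e3, e4]
    ring
  -- RHS conversion
  have hR : ∑ i : Fin n, ∑ j : Fin n, u i * (CartanA n i j * v j)
      = ∑ k ∈ range n, U k * (2 * Vv k - Vv (k+1) - Vp k) := by
    rw [← Fin.sum_univ_eq_sum_range (fun k => U k * (2 * Vv k - Vv (k+1) - Vp k)) n]
    apply Finset.sum_congr rfl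
    intro i _
    rw [← Finset.mul_sum, cartan_row n v i]
    rw [hU, extz_coe]
    congr 2
    rw [hV, extz_coe]
  have e5 : ∑ k ∈ range n, U k * Vp k = ∑ j ∈ range n, U (j+1) * Vv j := by
    rcases n with _ | m
    · simp
    · rw [Finset.sum_range_succ' (fun k => U k * Vp k) m,
        Finset.sum_range_succ (fun j => U (j+1) * Vv j) m]
      have : U (m+1) = 0 := hUn
      simp [hVp, prez, this, hV]
  rw [hLL, hR]
  have expand2 : ∀ k, U k * (2 * Vv k - Vv (k+1) - Vp k)
      = 2 * (U k * Vv k) - U k * Vv (k+1) - U k * Vp k := by intro k; ring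
  rw [Finset.sum_congr rfl (fun k _ => expand2 k)]
  rw [Finset.sum_sub_distrib, Finset.sum_sub_distrib, e5, ← Finset.mul_sum]
  ring

end Stmt16Aux

namespace Stmt16Aux

lemma exists_pair {m : ℕ} (z : Fin m → ℤ)
    (h2 : ∑ j, z j * z j = 2) (h0 : ∑ j, z j = 0) :
    ∃ a b : Fin m, a ≠ b ∧ z = fun j => (if j = a then (1:ℤ) else 0) - (if j = b then 1 else 0) := by
  classical
  have hb : ∀ j, z j * z j ≤ 2 := by
    intro j
    calc z j * z j ≤ ∑ k, z k * z k := by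
          apply Finset.single_le_sum (f := fun k => z k * z k) (fun k _ => mul_self_nonneg (z k)) (Finset.mem_univ j)
      _ = 2 := h2
  have hsmall : ∀ j, z j = -1 ∨ z j = 0 ∨ z j = 1 := by
    intro j
    have hj := hb j
    have hu : z j ≤ 1 := by
      by_contra h
      push_neg at h
      have h2' : 2 ≤ z j := h
      nlinarith
    have hl : -1 ≤ z j := by
      by_contra h
      push_neg at h
      have h2' : z j ≤ -2 := by omega
      nlinarith
    omega
  set P := Finset.univ.filter (fun j => z j = 1) with hP
  set N := Finset.univ.filter (fun j => z j = -1) with hN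
  have hzsq : ∀ j, z j * z j = (if z j = 1 then (1:ℤ) else 0) + (if z j = -1 then 1 else 0) := by
    intro j; rcases hsmall j with h | h | h <;> simp [h]
  have hz : ∀ j, z j = (if z j = 1 then (1:ℤ) else 0) - (if z j = -1 then 1 else 0) := by
    intro j; rcases hsmall j with h | h | h <;> simp [h]
  have hcard2 : (P.card : ℤ) + (N.card : ℤ) = 2 := by
    have := h2
    rw [Finset.sum_congr rfl (fun j _ => hzsq j), Finset.sum_add_distrib] at this
    rw [Finset.sum_boole, Finset.sum_boole] at this
    simpa [hP, hN] using this
  have hcard0 : (P.card : ℤ) - (N.card : ℤ) = 0 := by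
    have := h0
    rw [Finset.sum_congr rfl (fun j _ => hz j), Finset.sum_sub_distrib] at this
    rw [Finset.sum_boole, Finset.sum_boole] at this
    simpa [hP, hN] using this
  have hPcard : P.card = 1 := by omega
  have hNcard : N.card = 1 := by omega
  obtain ⟨a, ha⟩ := Finset.card_eq_one.mp hPcard
  obtain ⟨b, hbb⟩ := Finset.card_eq_one.mp hNcard
  have hza : z a = 1 := by
    have : a ∈ P := ha ▸ Finset.mem_singleton_self a
    simpa [hP] using this
  have hzb : z b = -1 := by
    have : b ∈ N := hbb ▸ Finset.mem_singleton_self b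
    simpa [hN] using this
  refine ⟨a, b, ?_, ?_⟩
  · intro h; rw [h, hzb] at hza; omega
  · funext j
    by_cases hja : j = a
    · subst hja
      have hab : j ≠ b := by intro h; rw [h, hzb] at hza; omega
      simp [hza, hab]
    · by_cases hjb : j = b
      · subst hjb; simp [hzb, hja]
      · simp [hja, hjb]
        rcases hsmall j with h | h | h
        · exfalso; apply hjb
          have : j ∈ N := by simp [hN, h]
          rwa [hbb, Finset.mem_singleton] at this
        · exact h
        · exfalso; apply hja
          have : j ∈ P := by simp [hP, h]
          rwa [ha, Finset.mem_singleton] at this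

end Stmt16Aux


namespace Stmt16Aux

variable {V K : Type*} [DecidableEq V] [DecidableEq K]

/-- The graph on `K` whose edges are the pairs `{a i, b i}`. -/
def HG (a b : V → K) : SimpleGraph K where
  Adj u v := u ≠ v ∧ ∃ i, s(a i, b i) = s(u, v)
  symm := ⟨by
    rintro u v ⟨h1, i, h2⟩
    exact ⟨h1.symm, i, by rw [h2, Sym2.eq_swap]⟩⟩
  loopless := ⟨fun u h => h.1 rfl⟩

/-- Transfer a walk in `graphOf A` to a walk in `HG a b`. -/
lemma walk_transfer (A : Matrix V V ℤ) (a b : V → K)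
    (hshare : ∀ ⦃i j : V⦄, (graphOf A).Adj i j →
      ∃ s : K, (s = a i ∨ s = b i) ∧ (s = a j ∨ s = b j)) :
    ∀ {x y : V} (q : (graphOf A).Walk x y) (u v : K),
      (u = a x ∨ u = b x) → (v = a y ∨ v = b y) →
      ∃ W : (HG a b).Walk u v, ∀ g ∈ W.edges, ∃ k ∈ q.support, s(a k, b k) = g := by
  intro x y q
  induction q with
  | nil =>
    rename_i x0
    intro u v hu hv
    by_cases huv : u = v
    · subst huv
      exact ⟨SimpleGraph.Walk.nil, by simp⟩
    · have hadj : (HG a b).Adj u v := by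
        refine (show _ ∧ _ from ⟨huv, ?_⟩)
        rcases hu with rfl | rfl <;> rcases hv with rfl | rfl
        · exact absurd rfl huv
        · exact ⟨_, rfl⟩
        · exact ⟨_, Sym2.eq_swap⟩
        · exact absurd rfl huv
      refine ⟨SimpleGraph.Walk.cons hadj SimpleGraph.Walk.nil, ?_⟩
      intro g hg
      simp only [SimpleGraph.Walk.edges_cons, SimpleGraph.Walk.edges_nil,
        List.mem_cons, List.not_mem_nil, or_false] at hg
      subst hg
      refine ⟨x0, by simp, ?_⟩
      rcases hu with rfl | rfl <;> rcases hv with rfl | rfl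
      · exact absurd rfl huv
      · rfl
      · exact Sym2.eq_swap
      · exact absurd rfl huv
  | cons h q ih =>
    rename_i x' j y' -- vertices
    intro u v hu hv
    obtain ⟨s, hs1, hs2⟩ := hshare h
    obtain ⟨W', hW'⟩ := ih s v hs2 hv
    by_cases hus : u = s
    · subst hus
      refine ⟨W', ?_⟩
      intro g hg
      obtain ⟨k, hk, hk2⟩ := hW' g hg
      exact ⟨k, by simp [hk], hk2⟩
    · have hadj : (HG a b).Adj u s := by
        refine (show _ ∧ _ from ⟨hus, ?_⟩)
        rcases hu with rfl | rfl <;> rcases hs1 with rfl | rfl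
        · exact absurd rfl hus
        · exact ⟨_, rfl⟩
        · exact ⟨_, Sym2.eq_swap⟩
        · exact absurd rfl hus
      refine ⟨SimpleGraph.Walk.cons hadj W', ?_⟩
      intro g hg
      simp only [SimpleGraph.Walk.edges_cons, List.mem_cons] at hg
      rcases hg with rfl | hg
      · refine ⟨x', by simp, ?_⟩
        rcases hu with rfl | rfl <;> rcases hs1 with rfl | rfl
        · exact absurd rfl hus
        · rfl
        · exact Sym2.eq_swap
        · exact absurd rfl hus
      · obtain ⟨k, hk, hk2⟩ := hW' g hg
        exact ⟨k, by simp [hk], hk2⟩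

end Stmt16Aux

namespace Stmt16Aux

variable {V K : Type*} [DecidableEq V] [DecidableEq K]

/-- Build a short walk in `graphOf A` from a path in `HG a b`. -/
lemma dist_bound [Fintype V] (A : Matrix V V ℤ) (a b : V → K)
    (hadj : ∀ ⦃i j : V⦄, i ≠ j → ∀ s : K, (s = a i ∨ s = b i) → (s = a j ∨ s = b j) →
      (graphOf A).Adj i j) :
    ∀ {u v : K} (P : (HG a b).Walk u v), P.IsPath →
      ∀ (x y : V), (u = a x ∨ u = b x) → (v = a y ∨ v = b y) →
      ∃ W : (graphOf A).Walk x y,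
        W.length + 1 ≤ (insert x (insert y
          (Finset.univ.filter fun i => s(a i, b i) ∈ P.edges))).card := by
  intro u v P
  induction P with
  | nil =>
    rename_i w0
    intro _ x y hx hy
    by_cases hxy : x = y
    · subst hxy
      refine ⟨SimpleGraph.Walk.nil, ?_⟩
      have hmem : x ∈ insert x (insert x
          (Finset.univ.filter fun i => s(a i, b i) ∈ (SimpleGraph.Walk.nil (G := HG a b) (u := w0)).edges)) :=
        Finset.mem_insert_self _ _
      have := Finset.card_pos.mpr ⟨x, hmem⟩
      simp only [SimpleGraph.Walk.length_nil]
      omega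
    · have hAdj : (graphOf A).Adj x y := hadj hxy w0 hx hy
      refine ⟨SimpleGraph.Walk.cons hAdj SimpleGraph.Walk.nil, ?_⟩
      have hsub : ({x, y} : Finset V) ⊆ insert x (insert y
          (Finset.univ.filter fun i => s(a i, b i) ∈ (SimpleGraph.Walk.nil (G := HG a b) (u := w0)).edges)) := by
        intro t ht
        rcases Finset.mem_insert.mp ht with rfl | ht
        · exact Finset.mem_insert_self _ _
        · exact Finset.mem_insert_of_mem (Finset.mem_insert.mpr (Or.inl (Finset.mem_singleton.mp ht)))
      have h2 : ({x, y} : Finset V).card = 2 := Finset.card_pair hxy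
      have := Finset.card_le_card hsub
      simp only [SimpleGraph.Walk.length_cons, SimpleGraph.Walk.length_nil]
      omega
  | cons h P ihP =>
    rename_i u u' v'
    intro hPath x y hx hy
    have hP : P.IsPath := hPath.of_cons
    have hu_not : u ∉ P.support := (SimpleGraph.Walk.cons_isPath_iff h P).mp hPath |>.2
    obtain ⟨i, hi⟩ := (show _ ∧ _ from h).2
    have hu'i : u' = a i ∨ u' = b i := by
      rcases Sym2.eq_iff.mp hi with ⟨h1, h2⟩ | ⟨h1, h2⟩
      · exact Or.inr h2.symm
      · exact Or.inl h1.symm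
    have hui : u = a i ∨ u = b i := by
      rcases Sym2.eq_iff.mp hi with ⟨h1, h2⟩ | ⟨h1, h2⟩
      · exact Or.inl h1.symm
      · exact Or.inr h2.symm
    obtain ⟨W', hW'⟩ := ihP hP i y hu'i hy
    by_cases hxy : x = y
    · subst hxy
      refine ⟨SimpleGraph.Walk.nil, ?_⟩
      have hmem : x ∈ insert x (insert x
          (Finset.univ.filter fun k => s(a k, b k) ∈ (SimpleGraph.Walk.cons h P).edges)) :=
        Finset.mem_insert_self _ _
      have := Finset.card_pos.mpr ⟨x, hmem⟩
      simp only [SimpleGraph.Walk.length_nil]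
      omega
    · set S := insert x (insert y
        (Finset.univ.filter fun k => s(a k, b k) ∈ (SimpleGraph.Walk.cons h P).edges)) with hS
      set S' := insert i (insert y
        (Finset.univ.filter fun k => s(a k, b k) ∈ P.edges)) with hS'
      have hS'S : S' ⊆ S := by
        intro t ht
        rcases Finset.mem_insert.mp ht with rfl | ht
        · refine Finset.mem_insert_of_mem (Finset.mem_insert_of_mem ?_)
          simp only [Finset.mem_filter, Finset.mem_univ, true_and,
            SimpleGraph.Walk.edges_cons, List.mem_cons]
          exact Or.inl hi
        · rcases Finset.mem_insert.mp ht with rfl | ht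
          · exact Finset.mem_insert_of_mem (Finset.mem_insert_self _ _)
          · refine Finset.mem_insert_of_mem (Finset.mem_insert_of_mem ?_)
            simp only [Finset.mem_filter, Finset.mem_univ, true_and,
              SimpleGraph.Walk.edges_cons, List.mem_cons] at ht ⊢
            exact Or.inr ht
      by_cases hxi : x = i
      · subst hxi
        refine ⟨W', ?_⟩
        have := Finset.card_le_card hS'S
        omega
      · have hAdj : (graphOf A).Adj x i := hadj hxi u hx hui
        refine ⟨SimpleGraph.Walk.cons hAdj W', ?_⟩
        have hxS' : x ∉ S' := by
          intro hmem
          rcases Finset.mem_insert.mp hmem with rfl | hmem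
          · exact hxi rfl
          rcases Finset.mem_insert.mp hmem with rfl | hmem
          · exact hxy rfl
          · simp only [Finset.mem_filter, Finset.mem_univ, true_and] at hmem
            -- then u ∈ P.support, contradiction
            apply hu_not
            rcases hx with rfl | rfl
            · exact SimpleGraph.Walk.fst_mem_support_of_mem_edges P hmem
            · exact SimpleGraph.Walk.snd_mem_support_of_mem_edges P hmem
        have hsub2 : insert x S' ⊆ S := by
          intro t ht
          rcases Finset.mem_insert.mp ht with rfl | ht
          · exact Finset.mem_insert_self _ _
          · exact hS'S ht
        have hcard : S'.card + 1 ≤ S.card := by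
          have := Finset.card_le_card hsub2
          rwa [Finset.card_insert_of_notMem hxS'] at this
        simp only [SimpleGraph.Walk.length_cons]
        omega

end Stmt16Aux

namespace Stmt16Aux

variable {V K : Type*} [DecidableEq V] [DecidableEq K]

/-- delta vector -/
def dl (i : V) : V → ℤ := fun k => if k = i then 1 else 0

lemma walk_vec {m : ℕ} (a b : V → K) (T : (V → ℤ) → (Fin m → ℤ)) (f : K → Fin m → ℤ)
    (Tadd : ∀ z w, T (z + w) = T z + T w)
    (hT : ∀ i : V, T (dl i) = f (a i) - f (b i)) :
    ∀ {u v : K} (W : (HG a b).Walk u v),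
      ∃ z : V → ℤ, T z = f u - f v ∧ ∀ k : V, s(a k, b k) ∉ W.edges → z k = 0 := by
  have T0 : T 0 = 0 := by
    have h := Tadd 0 0
    rw [add_zero] at h
    exact (left_eq_add.mp h)
  have Tneg : ∀ z, T (-z) = - T z := by
    intro z
    have h := Tadd z (-z)
    rw [add_neg_cancel, T0] at h
    exact (neg_eq_of_add_eq_zero_right h.symm).symm
  intro u v W
  induction W with
  | nil =>
    exact ⟨0, by simp [T0], fun k _ => rfl⟩
  | cons h W ih =>
    rename_i c c' d
    obtain ⟨z, hz1, hz2⟩ := ih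
    obtain ⟨i, hi⟩ := (show _ ∧ _ from h).2
    rcases Sym2.eq_iff.mp hi with ⟨h1, h2⟩ | ⟨h1, h2⟩
    · refine ⟨dl i + z, ?_, ?_⟩
      · rw [Tadd, hz1, hT, h1, h2]; abel
      · intro k hk
        simp only [SimpleGraph.Walk.edges_cons, List.mem_cons, not_or] at hk
        have hki : k ≠ i := by
          rintro rfl
          exact hk.1 hi
        simp [dl, hki, hz2 k hk.2]
    · refine ⟨-dl i + z, ?_, ?_⟩
      · rw [Tadd, Tneg, hz1, hT, h1, h2]; abel
      · intro k hk
        simp only [SimpleGraph.Walk.edges_cons, List.mem_cons, not_or] at hk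
        have hki : k ≠ i := by
          rintro rfl
          exact hk.1 (by rw [hi])
        simp [dl, hki, hz2 k hk.2]

lemma hg_acyclic {m : ℕ} (a b : V → K) (T : (V → ℤ) → (Fin m → ℤ)) (f : K → Fin m → ℤ)
    (Tadd : ∀ z w, T (z + w) = T z + T w)
    (hT : ∀ i : V, T (dl i) = f (a i) - f (b i))
    (Tinj : ∀ z, T z = 0 → z = 0) :
    (HG a b).IsAcyclic := by
  intro u c hc
  cases c with
  | nil => exact hc.ne_nil rfl
  | cons h W =>
    rename_i u'
    rw [SimpleGraph.Walk.cons_isCycle_iff] at hc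
    obtain ⟨hWp, hWe⟩ := hc
    obtain ⟨z, hz1, hz2⟩ := walk_vec a b T f Tadd hT W
    obtain ⟨i, hi⟩ := (show _ ∧ _ from h).2
    have hzi : z i = 0 := hz2 i (by rw [hi]; exact hWe)
    rcases Sym2.eq_iff.mp hi with ⟨h1, h2⟩ | ⟨h1, h2⟩
    · -- a i = u, b i = u' ; T (dl i) = f u - f u' ; T z = f u' - f u
      have : T (dl i + z) = 0 := by
        rw [Tadd, hz1, hT, h1, h2]; abel
      have := congrFun (Tinj _ this) i
      simp [dl, hzi] at this
    · have T0 : T 0 = 0 := by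
        have h := Tadd 0 0
        rw [add_zero] at h
        exact (left_eq_add.mp h)
      have Tneg : ∀ z', T (-z') = - T z' := by
        intro z'
        have h := Tadd z' (-z')
        rw [add_neg_cancel, T0] at h
        exact (neg_eq_of_add_eq_zero_right h.symm).symm
      have : T (z + (- dl i)) = 0 := by
        rw [Tadd, Tneg, hz1, hT, h1, h2]; abel
      have := congrFun (Tinj _ this) i
      simp [dl, hzi] at this

end Stmt16Aux

namespace Stmt16Aux

open Matrix

variable {V : Type*} [Fintype V] [DecidableEq V]

lemma dsum {α : Type*} [Fintype α] (B : Matrix α α ℤ) (u v : α → ℤ) :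
    ∑ i, ∑ j, u i * (B i j * v j) = u ⬝ᵥ B.mulVec v := by
  simp [dotProduct, Matrix.mulVec, Finset.mul_sum]

lemma main_pairing (n : ℕ) (A : Matrix V V ℤ) (e : V ≃ Fin n)
    (M N : Matrix (Fin n) (Fin n) ℤ) (hMN : M * N = 1)
    (hC : CartanA n = Mᵀ * ((Matrix.reindex e e) A) * M) (z w : V → ℤ) :
    ∑ j : Fin (n+1), psi n (N.mulVec (fun i => z (e.symm i))) j
        * psi n (N.mulVec (fun i => w (e.symm i))) j
      = ∑ i, ∑ k, z i * (A i k * w k) := by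
  set zh : Fin n → ℤ := fun i => z (e.symm i) with hzh
  set wh : Fin n → ℤ := fun i => w (e.symm i) with hwh
  rw [psi_dot, dsum, hC]
  have step1 : (N.mulVec zh) ⬝ᵥ (Mᵀ * (Matrix.reindex e e) A * M).mulVec (N.mulVec wh)
      = zh ⬝ᵥ ((Matrix.reindex e e) A).mulVec wh := by
    rw [mul_assoc, ← Matrix.mulVec_mulVec, Matrix.dotProduct_mulVec,
      Matrix.vecMul_transpose, Matrix.mulVec_mulVec, hMN, Matrix.one_mulVec,
      Matrix.mulVec_mulVec, mul_assoc, hMN, mul_one]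
  rw [step1, ← dsum]
  have hAij : ∀ i j : Fin n, ((Matrix.reindex e e) A) i j = A (e.symm i) (e.symm j) := by
    intro i j
    rw [Matrix.reindex_apply, Matrix.submatrix_apply]
  calc ∑ i : Fin n, ∑ j : Fin n, zh i * (((Matrix.reindex e e) A) i j * wh j)
      = ∑ i : Fin n, ∑ j : Fin n, z (e.symm i) * (A (e.symm i) (e.symm j) * w (e.symm j)) := by
        apply Finset.sum_congr rfl; intro i _
        apply Finset.sum_congr rfl; intro j _
        rw [hAij]
    _ = ∑ i : V, ∑ k : V, z i * (A i k * w k) := by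
        rw [← Equiv.sum_comp e.symm (fun i => ∑ k : V, z i * (A i k * w k))]
        apply Finset.sum_congr rfl; intro i _
        rw [← Equiv.sum_comp e.symm (fun k => z (e.symm i) * (A (e.symm i) k * w k))]

lemma main_inj (n : ℕ) (A : Matrix V V ℤ) (e : V ≃ Fin n)
    (M N : Matrix (Fin n) (Fin n) ℤ) (hMN : M * N = 1) (z : V → ℤ)
    (h : psi n (N.mulVec (fun i => z (e.symm i))) = 0) : z = 0 := by
  have h1 : N.mulVec (fun i => z (e.symm i)) = 0 := psi_eq_zero n _ h
  have h2 : (fun i => z (e.symm i)) = (0 : Fin n → ℤ) := by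
    have := congrArg (M.mulVec) h1
    rwa [Matrix.mulVec_mulVec, hMN, Matrix.one_mulVec, Matrix.mulVec_zero] at this
  funext i
  have := congrFun h2 (e i)
  simpa using this

lemma dl_dot {α : Type*} [Fintype α] [DecidableEq α] (p q : α) :
    ∑ j, dl p j * dl q j = if p = q then (1:ℤ) else 0 := by
  have h : ∀ j, dl p j * dl q j = if j = p then (if j = q then (1:ℤ) else 0) else 0 := by
    intro j; simp only [dl]; split_ifs <;> ring
  rw [Finset.sum_congr rfl (fun j _ => h j), Finset.sum_ite_eq' Finset.univ p
    (fun j => if j = q then (1:ℤ) else 0)]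
  simp only [Finset.mem_univ, if_true]

lemma double_delta (A : Matrix V V ℤ) (i j : V) :
    ∑ p, ∑ k, dl i p * (A p k * dl j k) = A i j := by
  have h1 : ∀ p, ∑ k, dl i p * (A p k * dl j k) = dl i p * A p j := by
    intro p
    rw [← Finset.mul_sum]
    congr 1
    have : ∀ k, A p k * dl j k = if k = j then A p k else 0 := by
      intro k; simp only [dl, mul_ite, mul_one, mul_zero]
    rw [Finset.sum_congr rfl (fun k _ => this k), Finset.sum_ite_eq' Finset.univ j (fun k => A p k)]
    simp
  rw [Finset.sum_congr rfl (fun p _ => h1 p)]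
  have : ∀ p, dl i p * A p j = if p = i then A p j else 0 := by
    intro p; simp only [dl, ite_mul, one_mul, zero_mul]
  rw [Finset.sum_congr rfl (fun p _ => this p), Finset.sum_ite_eq' Finset.univ i (fun p => A p j)]
  simp

end Stmt16Aux


open Stmt16Aux in
theorem stmt16 (n : ℕ) (V : Type*) [Fintype V] [DecidableEq V]
    (A : Matrix V V ℤ) (hsym : A.IsSymm) (hdiag : ∀ i, A i i = 2)
    (e : V ≃ Fin n) (hA : ZEquiv ((Matrix.reindex e e) A) (CartanA n))
    (x y : V) (p : (graphOf A).Walk x y) (hp : p.IsPath)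
    (hlen : p.length = (graphOf A).dist x y) :
    ∀ q : (graphOf A).Walk x y, q.IsPath → ∀ w ∈ p.support, w ∈ q.support := by
  classical
  obtain ⟨M, N, hMN, hNM, hC⟩ := hA
  intro q hq w hw
  set T : (V → ℤ) → (Fin (n+1) → ℤ) :=
    fun z => psi n (N.mulVec (fun i => z (e.symm i))) with hTdef
  have pair : ∀ z w, ∑ j, T z j * T w j = ∑ i, ∑ k, z i * (A i k * w k) :=
    fun z w => main_pairing n A e M N hMN hC z w
  have Tinj : ∀ z, T z = 0 → z = 0 := fun z h => main_inj n A e M N hMN z h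
  have Tadd : ∀ z w, T (z + w) = T z + T w := by
    intro z w
    have h1 : (fun i => (z + w) (e.symm i))
        = (fun i => z (e.symm i)) + (fun i => w (e.symm i)) := rfl
    rw [hTdef]
    simp only [h1, Matrix.mulVec_add, psi_add]
  have hroot : ∀ i : V, ∃ aa bb : Fin (n+1), aa ≠ bb ∧
      T (dl i) = fun j => (if j = aa then (1:ℤ) else 0) - (if j = bb then 1 else 0) := by
    intro i
    have h2 : ∑ j, T (dl i) j * T (dl i) j = 2 := by
      rw [pair, double_delta]; exact hdiag i
    have h0 : ∑ j, T (dl i) j = 0 := psi_sum n _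
    exact exists_pair _ h2 h0
  choose a b hab hform using hroot
  have hTdl : ∀ i, T (dl i) = dl (a i) - dl (b i) := by
    intro i; rw [hform i]; funext j; simp [dl]
  have Aval : ∀ i k : V, A i k
      = ((if a i = a k then (1:ℤ) else 0) + (if b i = b k then 1 else 0)
        - (if a i = b k then 1 else 0)) - (if b i = a k then 1 else 0) := by
    intro i k
    have hdd := pair (dl i) (dl k)
    rw [double_delta] at hdd
    rw [← hdd]
    have expand : ∀ j, T (dl i) j * T (dl k) j
        = dl (a i) j * dl (a k) j + dl (b i) j * dl (b k) j
          - dl (a i) j * dl (b k) j - dl (b i) j * dl (a k) j := by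
      intro j; rw [hTdl i, hTdl k]; simp only [Pi.sub_apply]; ring
    rw [Finset.sum_congr rfl (fun j _ => expand j)]
    rw [Finset.sum_sub_distrib, Finset.sum_sub_distrib, Finset.sum_add_distrib,
      dl_dot, dl_dot, dl_dot, dl_dot]
  have T0 : T 0 = 0 := by
    have h' := Tadd 0 0; rw [add_zero] at h'; exact left_eq_add.mp h'
  have Tneg : ∀ z, T (-z) = -T z := by
    intro z; have h' := Tadd z (-z); rw [add_neg_cancel, T0] at h'
    exact (neg_eq_of_add_eq_zero_right h'.symm).symm
  have phi_inj : ∀ i k : V, s(a i, b i) = s(a k, b k) → i = k := by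
    intro i k h
    rcases Sym2.eq_iff.mp h with ⟨h1, h2⟩ | ⟨h1, h2⟩
    · by_contra hik
      have hz0 : T (dl i + (- dl k)) = 0 := by
        rw [Tadd, Tneg, hTdl, hTdl, h1, h2]; abel
      have hz := Tinj _ hz0
      have h' := congrFun hz i
      simp only [Pi.add_apply, Pi.neg_apply, Pi.zero_apply, dl, if_pos rfl] at h'
      split_ifs at h' <;> omega
    · have hz0 : T (dl i + dl k) = 0 := by
        rw [Tadd, hTdl, hTdl, h1, h2]; abel
      have hz := Tinj _ hz0
      have h' := congrFun hz i
      simp only [Pi.add_apply, Pi.zero_apply, dl, if_pos rfl] at h'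
      split_ifs at h' <;> omega
  have hshare : ∀ ⦃i j : V⦄, (graphOf A).Adj i j →
      ∃ s : Fin (n+1), (s = a i ∨ s = b i) ∧ (s = a j ∨ s = b j) := by
    intro i j hij
    by_contra hno
    push_neg at hno
    have h1 : a i ≠ a j := ((hno (a i)) (Or.inl rfl)).1
    have h2 : a i ≠ b j := ((hno (a i)) (Or.inl rfl)).2
    have h3 : b i ≠ a j := ((hno (b i)) (Or.inr rfl)).1
    have h4 : b i ≠ b j := ((hno (b i)) (Or.inr rfl)).2
    have : A i j = 0 := by
      rw [Aval i j, if_neg h1, if_neg h4, if_neg h2, if_neg h3]; ring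
    exact (show _ ∧ _ from hij).2.1 this
  have hadj : ∀ ⦃i j : V⦄, i ≠ j → ∀ s : Fin (n+1),
      (s = a i ∨ s = b i) → (s = a j ∨ s = b j) → (graphOf A).Adj i j := by
    intro i j hij s hsi hsj
    have hphi : s(a i, b i) ≠ s(a j, b j) := fun h => hij (phi_inj _ _ h)
    have habi := hab i
    have habj := hab j
    have hA1 : A i j = 1 ∨ A i j = -1 := by
      rcases hsi with rfl | rfl
      · rcases hsj with h | h
        · -- a i = a j
          left
          have hbb : b i ≠ b j := fun hb => hphi (by rw [h, hb])
          have hab' : a i ≠ b j := fun h' => habj (h.symm.trans h')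
          have hba : b i ≠ a j := fun h' => habi (h.trans h'.symm)
          rw [Aval i j, if_pos h, if_neg hbb, if_neg hab', if_neg hba]; ring
        · -- a i = b j
          right
          have haa : a i ≠ a j := fun h' => habj (h'.symm.trans h)
          have hbb : b i ≠ b j := fun h' => habi (h.trans h'.symm)
          have hba : b i ≠ a j := fun h' =>
            hphi (by rw [h, h']; exact Sym2.eq_swap)
          rw [Aval i j, if_neg haa, if_neg hbb, if_pos h, if_neg hba]; ring
      · rcases hsj with h | h
        · -- b i = a j
          right
          have haa : a i ≠ a j := fun h' => habi (h'.trans h.symm)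
          have hbb : b i ≠ b j := fun h' => habj (h.symm.trans h')
          have hab' : a i ≠ b j := fun h' =>
            hphi (by rw [h', h]; exact Sym2.eq_swap)
          rw [Aval i j, if_neg haa, if_neg hbb, if_neg hab', if_pos h]; ring
        · -- b i = b j
          left
          have haa : a i ≠ a j := fun h' => hphi (by rw [h', h])
          have hab' : a i ≠ b j := fun h' => habi (h'.trans h.symm)
          have hba : b i ≠ a j := fun h' => habj (h'.symm.trans h)
          rw [Aval i j, if_neg haa, if_pos h, if_neg hab', if_neg hba]; ring
    have hAij : A i j ≠ 0 := by rcases hA1 with h | h <;> rw [h] <;> norm_num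
    have hAji : A j i ≠ 0 := by
      have hs : A j i = A i j := hsym.apply i j
      rw [hs]; exact hAij
    exact (show i ≠ j ∧ A i j ≠ 0 ∧ A j i ≠ 0 from ⟨hij, hAij, hAji⟩)
  have hacyc : (HG a b).IsAcyclic :=
    hg_acyclic a b T (fun c => dl c) Tadd (fun i => hTdl i) Tinj
  -- transfer the geodesic p
  obtain ⟨Wp, hWp⟩ := walk_transfer A a b hshare p (a x) (a y) (Or.inl rfl) (Or.inl rfl)
  set P := Wp.bypass with hPdef
  have hPpath : P.IsPath := SimpleGraph.Walk.bypass_isPath Wp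
  have hPedges : P.edges ⊆ Wp.edges := SimpleGraph.Walk.edges_bypass_subset Wp
  set mand : Finset V := insert x (insert y
    (Finset.univ.filter fun i => s(a i, b i) ∈ P.edges)) with hmanddef
  have hsubset : mand ⊆ p.support.toFinset := by
    intro t ht
    rw [List.mem_toFinset]
    rcases Finset.mem_insert.mp ht with rfl | ht
    · exact p.start_mem_support
    rcases Finset.mem_insert.mp ht with rfl | ht
    · exact p.end_mem_support
    · simp only [Finset.mem_filter, Finset.mem_univ, true_and] at ht
      obtain ⟨k, hk1, hk2⟩ := hWp _ (hPedges ht)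
      exact (phi_inj k t hk2) ▸ hk1
  obtain ⟨W, hWcard⟩ := dist_bound A a b hadj P hPpath x y (Or.inl rfl) (Or.inl rfl)
  rw [← hmanddef] at hWcard
  have hdist : (graphOf A).dist x y ≤ W.length := SimpleGraph.dist_le W
  have hcardsup : p.support.toFinset.card = p.length + 1 := by
    rw [List.toFinset_card_of_nodup hp.support_nodup, SimpleGraph.Walk.length_support]
  have heq : mand = p.support.toFinset := by
    apply Finset.eq_of_subset_of_card_le hsubset
    have := Finset.card_le_card hsubset
    omega
  -- transfer q
  obtain ⟨Wq, hWq⟩ := walk_transfer A a b hshare q (a x) (a y) (Or.inl rfl) (Or.inl rfl)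
  have hQpath : Wq.bypass.IsPath := SimpleGraph.Walk.bypass_isPath Wq
  have hPQ : P = Wq.bypass := by
    have huniq := SimpleGraph.isAcyclic_iff_path_unique.mp hacyc
      ⟨P, hPpath⟩ ⟨Wq.bypass, hQpath⟩
    exact congrArg Subtype.val huniq
  have hwmand : w ∈ mand := by rw [heq]; exact List.mem_toFinset.mpr hw
  rcases Finset.mem_insert.mp hwmand with rfl | hwm
  · exact q.start_mem_support
  rcases Finset.mem_insert.mp hwm with rfl | hwm
  · exact q.end_mem_support
  · simp only [Finset.mem_filter, Finset.mem_univ, true_and] at hwm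
    rw [hPQ] at hwm
    obtain ⟨k, hk1, hk2⟩ := hWq _ (SimpleGraph.Walk.edges_bypass_subset Wq hwm)
    exact (phi_inj k w hk2) ▸ hk1
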